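/- Let X⋆ ∈ ℝ^{n1×n2} have rank r with compact SVD X⋆ = V⋆Σ⋆W⋆ᵀ, let X_t ∈ ℝ^{n1×n2} have rank r with compact SVD X_t = V_tΣ_tW_tᵀ, and let X' ∈ ℝ^{n1×n2} have rank r. Assume max{‖V_{⋆,⊥}ᵀV_t‖, ‖W_{⋆,⊥}ᵀW_t‖} ≤ 1/8, ‖X_t − X⋆‖ ≤ σ_min(X⋆)/80, and ‖X_t − X'‖_F ≤ σ_min(X⋆)/80. Then ‖X_t − X'‖_F ≤ (5/4)·(‖V⋆ᵀ(X_t − X')‖_F + ‖(X_t − X')W⋆‖_F) and ‖V_{⋆,⊥}ᵀ(X_t − X')W_{⋆,⊥}‖_F ≤ (1/4)·(‖V⋆ᵀ(X_t − X')‖_F + ‖(X_t − X')W⋆‖_F). -/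

import Mathlib

open Matrix MeasureTheory ProbabilityTheory
open scoped BigOperators

noncomputable section

/-- Frobenius inner product `⟨A, B⟩ = trace (Aᵀ * B)`. -/
def frobInner {n1 n2 : ℕ} (A B : Matrix (Fin n1) (Fin n2) ℝ) : ℝ :=
  Matrix.trace (Aᵀ * B)

/-- Frobenius norm of a matrix. -/
def frobNorm {n1 n2 : ℕ} (A : Matrix (Fin n1) (Fin n2) ℝ) : ℝ :=
  Real.sqrt (∑ i, ∑ j, A i j ^ 2)

/-- Spectral (ℓ²-operator) norm of a matrix. -/
def specNorm {n1 n2 : ℕ} (A : Matrix (Fin n1) (Fin n2) ℝ) : ℝ :=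
  ‖LinearMap.toContinuousLinearMap (Matrix.toEuclideanLin A)‖

/-- Euclidean norm of a vector in ℝ^m. -/
def vecNorm {m : ℕ} (v : Fin m → ℝ) : ℝ :=
  Real.sqrt (∑ i, v i ^ 2)

/-- Smallest nonzero singular value of a matrix: the singular values of `X` are the
square roots of the eigenvalues of `Xᴴ * X`. -/
def sigmaMin {n1 n2 : ℕ} (X : Matrix (Fin n1) (Fin n2) ℝ) : ℝ :=
  sInf {s : ℝ | 0 < s ∧ ∃ i : Fin n2,
    s ^ 2 = (show (Xᵀ * X).IsHermitian by
      simpa using Matrix.isHermitian_conjTranspose_mul_self X).eigenvalues i}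

/-- The measurement operator `𝒜(X) i = (1/√m) ⟨A i, X⟩`. -/
def measOp {n1 n2 m : ℕ} (A : Fin m → Matrix (Fin n1) (Fin n2) ℝ)
    (X : Matrix (Fin n1) (Fin n2) ℝ) : Fin m → ℝ :=
  fun i => (Real.sqrt m)⁻¹ * frobInner (A i) X

/-- The adjoint `𝒜*(u) = (1/√m) ∑ i, u i • A i`. -/
def measAdj {n1 n2 m : ℕ} (A : Fin m → Matrix (Fin n1) (Fin n2) ℝ)
    (u : Fin m → ℝ) : Matrix (Fin n1) (Fin n2) ℝ :=
  (Real.sqrt m)⁻¹ • ∑ i, u i • A i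

/-- The composite operator `𝒜*𝒜`. -/
def opAA {n1 n2 m : ℕ} (A : Fin m → Matrix (Fin n1) (Fin n2) ℝ)
    (X : Matrix (Fin n1) (Fin n2) ℝ) : Matrix (Fin n1) (Fin n2) ℝ :=
  measAdj A (measOp A X)

/-- Rank-`k` restricted isometry property with constant `δ`. -/
def HasRIP {n1 n2 m : ℕ} (A : Fin m → Matrix (Fin n1) (Fin n2) ℝ) (k : ℕ) (δ : ℝ) : Prop :=
  ∀ Z : Matrix (Fin n1) (Fin n2) ℝ, Z.rank ≤ k →
    (1 - δ) * frobNorm Z ^ 2 ≤ vecNorm (measOp A Z) ^ 2 ∧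
      vecNorm (measOp A Z) ^ 2 ≤ (1 + δ) * frobNorm Z ^ 2

/-- Compact SVD: `X = V * S * Wᵀ`, `V, W` with orthonormal columns, `S` diagonal with
positive diagonal entries. -/
def IsCompactSVD {n1 n2 r : ℕ} (X : Matrix (Fin n1) (Fin n2) ℝ)
    (V : Matrix (Fin n1) (Fin r) ℝ) (S : Matrix (Fin r) (Fin r) ℝ)
    (W : Matrix (Fin n2) (Fin r) ℝ) : Prop :=
  X = V * S * Wᵀ ∧ Vᵀ * V = 1 ∧ Wᵀ * W = 1 ∧
    (∀ i j, i ≠ j → S i j = 0) ∧ (∀ i, 0 < S i i)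

/-- `Vp` is a matrix whose columns form an orthonormal basis of the orthogonal
complement of the column space of `V` (which has orthonormal columns). -/
def IsOrthComplement {n r : ℕ} (V : Matrix (Fin n) (Fin r) ℝ)
    (Vp : Matrix (Fin n) (Fin (n - r)) ℝ) : Prop :=
  Vpᵀ * Vp = 1 ∧ Vᵀ * Vp = 0

end
section AuxLemmas
open Matrix
namespace Aux5

variable {n1 n2 n3 r m k : ℕ}

lemma vecNorm_nonneg (v : Fin m → ℝ) : 0 ≤ vecNorm v := Real.sqrt_nonneg _

lemma vecNorm_sq (v : Fin m → ℝ) : vecNorm v ^ 2 = ∑ i, v i ^ 2 :=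
  Real.sq_sqrt (Finset.sum_nonneg fun i _ => sq_nonneg _)

lemma vecNorm_eq (v : Fin m → ℝ) :
    vecNorm v = ‖(WithLp.equiv 2 (Fin m → ℝ)).symm v‖ := by
  rw [EuclideanSpace.norm_eq]
  simp [Real.norm_eq_abs, sq_abs]
  rfl

lemma vecNorm_pos {v : Fin m → ℝ} (hv : v ≠ 0) : 0 < vecNorm v := by
  rcases (vecNorm_nonneg v).lt_or_eq with h | h
  · exact h
  · exfalso
    apply hv
    have h2 : ∑ i, v i ^ 2 = 0 := by
      have := vecNorm_sq v
      rw [← h] at this; simpa using this.symm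
    funext i
    have := (Finset.sum_eq_zero_iff_of_nonneg (fun i _ => sq_nonneg (v i))).1 h2 i (Finset.mem_univ i)
    exact pow_eq_zero_iff (by norm_num) |>.1 this

lemma vecNorm_neg (v : Fin m → ℝ) : vecNorm (-v) = vecNorm v := by
  unfold vecNorm; simp

lemma vecNorm_add_le (u v : Fin m → ℝ) : vecNorm (u + v) ≤ vecNorm u + vecNorm v := by
  rw [vecNorm_eq, vecNorm_eq, vecNorm_eq]
  exact norm_add_le _ _

lemma sq_le_imp (a b : ℝ) (hb : 0 ≤ b) (h : a ^ 2 ≤ b ^ 2) (ha : 0 ≤ a) : a ≤ b := by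
  nlinarith

lemma frobNorm_nonneg (A : Matrix (Fin n1) (Fin n2) ℝ) : 0 ≤ frobNorm A := Real.sqrt_nonneg _

lemma frobNorm_sq (A : Matrix (Fin n1) (Fin n2) ℝ) :
    frobNorm A ^ 2 = ∑ i, ∑ j, A i j ^ 2 :=
  Real.sq_sqrt (Finset.sum_nonneg fun i _ => Finset.sum_nonneg fun j _ => sq_nonneg _)

lemma frobNorm_sq_cols (A : Matrix (Fin n1) (Fin n2) ℝ) :
    frobNorm A ^ 2 = ∑ j, vecNorm (fun i => A i j) ^ 2 := by
  rw [frobNorm_sq, Finset.sum_comm]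
  exact Finset.sum_congr rfl fun j _ => (vecNorm_sq _).symm

lemma mulVec_le_spec (A : Matrix (Fin n1) (Fin n2) ℝ) (x : Fin n2 → ℝ) :
    vecNorm (A *ᵥ x) ≤ specNorm A * vecNorm x := by
  rw [vecNorm_eq, vecNorm_eq]
  have := (LinearMap.toContinuousLinearMap (Matrix.toEuclideanLin A)).le_opNorm
    ((WithLp.equiv 2 (Fin n2 → ℝ)).symm x)
  simpa [specNorm] using this

lemma specNorm_le_bound (A : Matrix (Fin n1) (Fin n2) ℝ) {c : ℝ} (hc : 0 ≤ c)
    (h : ∀ x, vecNorm (A *ᵥ x) ≤ c * vecNorm x) : specNorm A ≤ c := by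
  apply ContinuousLinearMap.opNorm_le_bound _ hc
  intro x
  have := h ((WithLp.equiv 2 (Fin n2 → ℝ)) x)
  rw [vecNorm_eq, vecNorm_eq] at this
  simp at this
  exact this

lemma specNorm_nonneg (A : Matrix (Fin n1) (Fin n2) ℝ) : 0 ≤ specNorm A := norm_nonneg _

lemma dot_mulVec_mulVec (A : Matrix (Fin n1) (Fin n2) ℝ) (B : Matrix (Fin n1) (Fin n3) ℝ)
    (x : Fin n2 → ℝ) (y : Fin n3 → ℝ) :
    (A *ᵥ x) ⬝ᵥ (B *ᵥ y) = ((Aᵀ * B) *ᵥ y) ⬝ᵥ x := by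
  rw [← Matrix.mulVec_mulVec, Matrix.mulVec_transpose, ← Matrix.dotProduct_mulVec,
    dotProduct_comm]

lemma dot_self (v : Fin m → ℝ) : v ⬝ᵥ v = vecNorm v ^ 2 := by
  rw [vecNorm_sq]; simp [dotProduct, sq]

lemma dot_le (u v : Fin m → ℝ) : u ⬝ᵥ v ≤ vecNorm u * vecNorm v := by
  have h : u ⬝ᵥ v = inner ℝ ((WithLp.equiv 2 (Fin m → ℝ)).symm u) ((WithLp.equiv 2 (Fin m → ℝ)).symm v) := by
    simp [dotProduct, PiLp.inner_apply, RCLike.inner_apply, mul_comm]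
  rw [h, vecNorm_eq, vecNorm_eq]
  exact real_inner_le_norm _ _

lemma frobNorm_transpose (A : Matrix (Fin n1) (Fin n2) ℝ) : frobNorm Aᵀ = frobNorm A := by
  unfold frobNorm
  rw [Finset.sum_comm]
  rfl

lemma frobNorm_mul_le_left (A : Matrix (Fin n1) (Fin n2) ℝ) (B : Matrix (Fin n2) (Fin n3) ℝ) :
    frobNorm (A * B) ≤ specNorm A * frobNorm B := by
  apply sq_le_imp _ _ (mul_nonneg (specNorm_nonneg A) (frobNorm_nonneg B)) _ (frobNorm_nonneg _)
  rw [mul_pow, frobNorm_sq_cols, frobNorm_sq_cols, Finset.mul_sum]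
  apply Finset.sum_le_sum
  intro j _
  have hcol : (fun i => (A * B) i j) = A *ᵥ (fun i => B i j) := by
    funext i; simp [Matrix.mul_apply, Matrix.mulVec, dotProduct]
  rw [hcol, ← mul_pow]
  have h1 := mulVec_le_spec A (fun i => B i j)
  have h2 := vecNorm_nonneg (A *ᵥ fun i => B i j)
  nlinarith [vecNorm_nonneg (fun i => B i j), specNorm_nonneg A]

lemma specNorm_transpose_le (A : Matrix (Fin n1) (Fin n2) ℝ) : specNorm Aᵀ ≤ specNorm A := by
  apply specNorm_le_bound _ (specNorm_nonneg A)
  intro x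
  have h1 : vecNorm (Aᵀ *ᵥ x) ^ 2 = (A *ᵥ (Aᵀ *ᵥ x)) ⬝ᵥ x := by
    rw [← dot_self]
    rw [dot_mulVec_mulVec Aᵀ Aᵀ x x, Matrix.transpose_transpose, ← Matrix.mulVec_mulVec]
  have h2 : (A *ᵥ (Aᵀ *ᵥ x)) ⬝ᵥ x ≤ specNorm A * vecNorm (Aᵀ *ᵥ x) * vecNorm x := by
    calc (A *ᵥ (Aᵀ *ᵥ x)) ⬝ᵥ x ≤ vecNorm (A *ᵥ (Aᵀ *ᵥ x)) * vecNorm x := dot_le _ _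
    _ ≤ (specNorm A * vecNorm (Aᵀ *ᵥ x)) * vecNorm x := by
        have := mulVec_le_spec A (Aᵀ *ᵥ x)
        have := vecNorm_nonneg x
        nlinarith
  rcases (vecNorm_nonneg (Aᵀ *ᵥ x)).lt_or_eq with h | h
  · nlinarith
  · rw [← h]
    exact mul_nonneg (specNorm_nonneg A) (vecNorm_nonneg x)

lemma specNorm_transpose (A : Matrix (Fin n1) (Fin n2) ℝ) : specNorm Aᵀ = specNorm A := by
  refine le_antisymm (specNorm_transpose_le A) ?_
  have := specNorm_transpose_le Aᵀ
  rwa [Matrix.transpose_transpose] at this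

lemma frobNorm_mul_le_right (A : Matrix (Fin n1) (Fin n2) ℝ) (B : Matrix (Fin n2) (Fin n3) ℝ) :
    frobNorm (A * B) ≤ frobNorm A * specNorm B := by
  rw [← frobNorm_transpose (A * B), Matrix.transpose_mul]
  calc frobNorm (Bᵀ * Aᵀ) ≤ specNorm Bᵀ * frobNorm Aᵀ := frobNorm_mul_le_left _ _
  _ = frobNorm A * specNorm B := by rw [specNorm_transpose, frobNorm_transpose]; ring

lemma specNorm_mul_le (A : Matrix (Fin n1) (Fin n2) ℝ) (B : Matrix (Fin n2) (Fin n3) ℝ) :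
    specNorm (A * B) ≤ specNorm A * specNorm B := by
  apply specNorm_le_bound _ (mul_nonneg (specNorm_nonneg A) (specNorm_nonneg B))
  intro x
  rw [← Matrix.mulVec_mulVec]
  calc vecNorm (A *ᵥ (B *ᵥ x)) ≤ specNorm A * vecNorm (B *ᵥ x) := mulVec_le_spec _ _
  _ ≤ specNorm A * (specNorm B * vecNorm x) := by
      have := mulVec_le_spec B x
      have := specNorm_nonneg A
      nlinarith
  _ = specNorm A * specNorm B * vecNorm x := by ring

lemma specNorm_le_frobNorm (A : Matrix (Fin n1) (Fin n2) ℝ) : specNorm A ≤ frobNorm A := by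
  apply specNorm_le_bound _ (frobNorm_nonneg A)
  intro x
  apply sq_le_imp _ _ (mul_nonneg (frobNorm_nonneg A) (vecNorm_nonneg x)) _ (vecNorm_nonneg _)
  rw [vecNorm_sq, mul_pow, frobNorm_sq, vecNorm_sq, Finset.sum_mul]
  apply Finset.sum_le_sum
  intro i _
  have : (A *ᵥ x) i = ∑ j, A i j * x j := rfl
  rw [this]
  exact Finset.sum_mul_sq_le_sq_mul_sq Finset.univ _ _

end Aux5
end AuxLemmas
section AuxLemmas2
open Matrix
namespace Aux5
variable {n1 n2 n3 r m k : ℕ}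

lemma orth_mulVec_norm {Q : Matrix (Fin n1) (Fin r) ℝ} (hQ : Qᵀ * Q = 1) (x : Fin r → ℝ) :
    vecNorm (Q *ᵥ x) = vecNorm x := by
  have h : vecNorm (Q *ᵥ x) ^ 2 = vecNorm x ^ 2 := by
    rw [← dot_self, dot_mulVec_mulVec, hQ, Matrix.one_mulVec, dot_self]
  have h1 := vecNorm_nonneg (Q *ᵥ x)
  have h2 := vecNorm_nonneg x
  nlinarith

lemma spec_orth_le_one {Q : Matrix (Fin n1) (Fin r) ℝ} (hQ : Qᵀ * Q = 1) :
    specNorm Q ≤ 1 := by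
  apply specNorm_le_bound _ zero_le_one
  intro x
  rw [orth_mulVec_norm hQ, one_mul]

lemma orth_complete {Q : Matrix (Fin n1) (Fin r) ℝ} {Qp : Matrix (Fin n1) (Fin (n1 - r)) ℝ}
    (hQ : Qᵀ * Q = 1) (hQp : Qpᵀ * Qp = 1) (hmix : Qᵀ * Qp = 0) :
    Q * Qᵀ + Qp * Qpᵀ = 1 := by
  have hr : r ≤ n1 := by
    have h1 : (Qᵀ * Q).rank = r := by rw [hQ, Matrix.rank_one, Fintype.card_fin]
    have h2 : (Qᵀ * Q).rank ≤ n1 := le_trans (Matrix.rank_mul_le_left _ _)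
      (le_trans (Matrix.rank_le_card_width Qᵀ) (by simp))
    omega
  have e : Fin n1 ≃ Fin r ⊕ Fin (n1 - r) :=
    (finCongr (Nat.add_sub_cancel' hr).symm).trans finSumFinEquiv.symm
  have hmix' : Qpᵀ * Q = 0 := by
    have := congrArg Matrix.transpose hmix
    rwa [Matrix.transpose_mul, Matrix.transpose_transpose, Matrix.transpose_zero] at this
  have h1 : fromRows Qᵀ Qpᵀ * fromCols Q Qp = 1 := by
    rw [fromRows_mul_fromCols, hQ, hQp, hmix, hmix', fromBlocks_one]
  have h2 : fromCols Q Qp * fromRows Qᵀ Qpᵀ = 1 :=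
    (fromCols_mul_fromRows_eq_one_comm e Q Qp Qᵀ Qpᵀ).2 h1
  rwa [fromCols_mul_fromRows] at h2

lemma vec_pythagoras {Q : Matrix (Fin n1) (Fin r) ℝ} {Qp : Matrix (Fin n1) (Fin k) ℝ}
    (hcomp : Q * Qᵀ + Qp * Qpᵀ = 1) (x : Fin n1 → ℝ) :
    vecNorm (Qᵀ *ᵥ x) ^ 2 + vecNorm (Qpᵀ *ᵥ x) ^ 2 = vecNorm x ^ 2 := by
  rw [← dot_self, ← dot_self, ← dot_self]
  rw [dot_mulVec_mulVec Qᵀ Qᵀ x x, dot_mulVec_mulVec Qpᵀ Qpᵀ x x]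
  rw [Matrix.transpose_transpose, Matrix.transpose_transpose]
  rw [← add_dotProduct, ← Matrix.add_mulVec, hcomp, Matrix.one_mulVec, dotProduct_comm]

lemma spec_orthT_le_one {Q : Matrix (Fin n1) (Fin r) ℝ} {Qp : Matrix (Fin n1) (Fin k) ℝ}
    (hcomp : Q * Qᵀ + Qp * Qpᵀ = 1) : specNorm Qᵀ ≤ 1 := by
  apply specNorm_le_bound _ zero_le_one
  intro x
  rw [one_mul]
  apply sq_le_imp _ _ (vecNorm_nonneg x) _ (vecNorm_nonneg _)
  have := vec_pythagoras hcomp x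
  nlinarith [vecNorm_nonneg (Qpᵀ *ᵥ x), sq_nonneg (vecNorm (Qpᵀ *ᵥ x))]

lemma frob_pythagoras_left {Q : Matrix (Fin n1) (Fin r) ℝ} {Qp : Matrix (Fin n1) (Fin k) ℝ}
    (hcomp : Q * Qᵀ + Qp * Qpᵀ = 1) (M : Matrix (Fin n1) (Fin n2) ℝ) :
    frobNorm (Qᵀ * M) ^ 2 + frobNorm (Qpᵀ * M) ^ 2 = frobNorm M ^ 2 := by
  rw [frobNorm_sq_cols, frobNorm_sq_cols, frobNorm_sq_cols, ← Finset.sum_add_distrib]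
  apply Finset.sum_congr rfl
  intro j _
  have hc1 : (fun i => (Qᵀ * M) i j) = Qᵀ *ᵥ (fun i => M i j) := by
    funext i; simp [Matrix.mul_apply, Matrix.mulVec, dotProduct]
  have hc2 : (fun i => (Qpᵀ * M) i j) = Qpᵀ *ᵥ (fun i => M i j) := by
    funext i; simp [Matrix.mul_apply, Matrix.mulVec, dotProduct]
  rw [hc1, hc2, vec_pythagoras hcomp]

lemma frob_pythagoras_right {Q : Matrix (Fin n2) (Fin r) ℝ} {Qp : Matrix (Fin n2) (Fin k) ℝ}
    (hcomp : Q * Qᵀ + Qp * Qpᵀ = 1) (M : Matrix (Fin n1) (Fin n2) ℝ) :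
    frobNorm (M * Q) ^ 2 + frobNorm (M * Qp) ^ 2 = frobNorm M ^ 2 := by
  have h1 : frobNorm (M * Q) = frobNorm (Qᵀ * Mᵀ) := by
    rw [← Matrix.transpose_mul, frobNorm_transpose]
  have h2 : frobNorm (M * Qp) = frobNorm (Qpᵀ * Mᵀ) := by
    rw [← Matrix.transpose_mul, frobNorm_transpose]
  rw [h1, h2, ← frobNorm_transpose M]
  exact frob_pythagoras_left hcomp Mᵀ

lemma frobNorm_eq_norm (A : Matrix (Fin n1) (Fin n2) ℝ) :
    frobNorm A = ‖(WithLp.equiv 2 (Fin n1 × Fin n2 → ℝ)).symm (fun p => A p.1 p.2)‖ := by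
  rw [EuclideanSpace.norm_eq]
  unfold frobNorm
  congr 1
  rw [Fintype.sum_prod_type]
  apply Finset.sum_congr rfl
  intro i _
  apply Finset.sum_congr rfl
  intro j _
  rw [Real.norm_eq_abs, sq_abs]
  rfl

lemma frobNorm_add_le (A B : Matrix (Fin n1) (Fin n2) ℝ) :
    frobNorm (A + B) ≤ frobNorm A + frobNorm B := by
  rw [frobNorm_eq_norm, frobNorm_eq_norm, frobNorm_eq_norm]
  have : ((WithLp.equiv 2 (Fin n1 × Fin n2 → ℝ)).symm (fun p => (A + B) p.1 p.2)) =
      ((WithLp.equiv 2 (Fin n1 × Fin n2 → ℝ)).symm (fun p => A p.1 p.2)) +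
      ((WithLp.equiv 2 (Fin n1 × Fin n2 → ℝ)).symm (fun p => B p.1 p.2)) := by
    rfl
  rw [this]
  exact norm_add_le _ _

lemma frobNorm_neg (A : Matrix (Fin n1) (Fin n2) ℝ) : frobNorm (-A) = frobNorm A := by
  unfold frobNorm; simp

lemma inverse_of_lb (A : Matrix (Fin r) (Fin r) ℝ) {c : ℝ} (hc : 0 < c)
    (h : ∀ x, c * vecNorm x ≤ vecNorm (A *ᵥ x)) :
    IsUnit A.det ∧ specNorm A⁻¹ ≤ c⁻¹ := by
  have hdet : A.det ≠ 0 := by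
    intro hd
    obtain ⟨v, hv, hAv⟩ := (Matrix.exists_mulVec_eq_zero_iff).2 hd
    have h1 := h v
    rw [hAv] at h1
    have h2 : vecNorm (0 : Fin r → ℝ) = 0 := by
      unfold vecNorm; simp
    rw [h2] at h1
    nlinarith [vecNorm_pos hv]
  have hu : IsUnit A.det := isUnit_iff_ne_zero.2 hdet
  refine ⟨hu, ?_⟩
  apply specNorm_le_bound _ (by positivity)
  intro y
  have h1 := h (A⁻¹ *ᵥ y)
  rw [Matrix.mulVec_mulVec, Matrix.mul_nonsing_inv A hu, Matrix.one_mulVec] at h1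
  rw [← sub_nonneg]
  have e2 : c⁻¹ * vecNorm y - vecNorm (A⁻¹ *ᵥ y) = c⁻¹ * (vecNorm y - c * vecNorm (A⁻¹ *ᵥ y)) := by
    field_simp
  rw [e2]
  have e3 : 0 ≤ vecNorm y - c * vecNorm (A⁻¹ *ᵥ y) := by linarith
  exact mul_nonneg (le_of_lt (inv_pos.2 hc)) e3

lemma diag_lb (S : Matrix (Fin r) (Fin r) ℝ) {σ : ℝ} (hσ : 0 ≤ σ)
    (hdiag : ∀ i j, i ≠ j → S i j = 0) (hpos : ∀ i, σ ≤ S i i) (x : Fin r → ℝ) :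
    σ * vecNorm x ≤ vecNorm (S *ᵥ x) := by
  apply sq_le_imp _ _ (vecNorm_nonneg _) _ (mul_nonneg hσ (vecNorm_nonneg x))
  rw [mul_pow, vecNorm_sq, vecNorm_sq, Finset.mul_sum]
  apply Finset.sum_le_sum
  intro i _
  have hSv : (S *ᵥ x) i = S i i * x i := by
    rw [Matrix.mulVec, dotProduct]
    rw [Finset.sum_eq_single i]
    · intro b _ hb
      rw [hdiag i b (Ne.symm hb), zero_mul]
    · intro hi; exact absurd (Finset.mem_univ i) hi
  rw [hSv]
  have h2 : σ ^ 2 ≤ S i i ^ 2 := by nlinarith [hpos i]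
  nlinarith [mul_nonneg (sub_nonneg.2 h2) (sq_nonneg (x i))]

end Aux5
end AuxLemmas2
section AuxLemmas3
open Matrix
namespace Aux5
variable {n1 n2 n3 r m k : ℕ}

lemma schur_col (T : Matrix (Fin n1) (Fin n2) ℝ) (hT : T.rank ≤ r)
    (P : Matrix (Fin n1) (Fin r) ℝ) (Q : Matrix (Fin n2) (Fin r) ℝ)
    (Q2 : Matrix (Fin n2) (Fin k) ℝ) (hA : IsUnit (Pᵀ * T * Q).det) :
    T * Q2 = T * Q * ((Pᵀ * T * Q)⁻¹ * (Pᵀ * (T * Q2))) := by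
  classical
  have hsub : LinearMap.range (T * Q).mulVecLin ≤ LinearMap.range T.mulVecLin := by
    rw [Matrix.mulVecLin_mul]
    exact LinearMap.range_comp_le_range _ _
  have hrankTQ : r ≤ (T * Q).rank := by
    have h1 : (Pᵀ * T * Q).rank = r := by
      rw [Matrix.rank_of_isUnit _ ((Matrix.isUnit_iff_isUnit_det _).2 hA), Fintype.card_fin]
    have h2 : (Pᵀ * (T * Q)).rank ≤ (T * Q).rank := Matrix.rank_mul_le_right _ _
    rw [← Matrix.mul_assoc] at h2
    omega
  have hrange : LinearMap.range (T * Q).mulVecLin = LinearMap.range T.mulVecLin := by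
    apply Submodule.eq_of_le_of_finrank_le hsub
    exact le_trans hT hrankTQ
  have hcols : ∀ j : Fin k, ∃ w : Fin r → ℝ,
      (T * Q).mulVecLin w = (T * Q2).mulVecLin (Pi.single j 1) := by
    intro j
    have hmem : (T * Q2).mulVecLin (Pi.single j 1) ∈ LinearMap.range T.mulVecLin := by
      rw [Matrix.mulVecLin_mul]
      exact ⟨Q2.mulVecLin (Pi.single j 1), rfl⟩
    rw [← hrange] at hmem
    exact hmem
  choose w hw using hcols
  set L : Matrix (Fin r) (Fin k) ℝ := Matrix.of (fun i j => w j i) with hL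
  have hTQ2 : T * Q2 = T * Q * L := by
    ext i j
    have := congrFun (hw j) i
    simp only [Matrix.mulVecLin_apply] at this
    rw [Matrix.mulVec_single] at this
    have hcol : (T * Q) *ᵥ (w j) = (T * Q) *ᵥ (fun a => L a j) := rfl
    rw [hcol] at this
    have h2 : ((T * Q) *ᵥ fun a => L a j) i = (T * Q * L) i j := by
      simp [Matrix.mul_apply, Matrix.mulVec, dotProduct]
    rw [h2] at this
    simpa using this.symm
  have hKey : Pᵀ * (T * Q2) = (Pᵀ * T * Q) * L := by
    rw [hTQ2, ← Matrix.mul_assoc, ← Matrix.mul_assoc]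
  have hLval : L = (Pᵀ * T * Q)⁻¹ * (Pᵀ * (T * Q2)) := by
    rw [hKey, ← Matrix.mul_assoc, Matrix.nonsing_inv_mul _ hA, Matrix.one_mul]
  conv_rhs => rw [← hLval]
  exact hTQ2

lemma rank_svd_le {X : Matrix (Fin n1) (Fin n2) ℝ} {V : Matrix (Fin n1) (Fin r) ℝ}
    {S : Matrix (Fin r) (Fin r) ℝ} {W : Matrix (Fin n2) (Fin r) ℝ}
    (h : X = V * S * Wᵀ) : X.rank ≤ r := by
  rw [h]
  refine le_trans (Matrix.rank_mul_le_left _ _) (le_trans (Matrix.rank_mul_le_left _ _) ?_)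
  exact le_trans (Matrix.rank_le_card_width V) (by simp)

lemma rank_zero_eq_zero {X : Matrix (Fin n1) (Fin n2) ℝ} (h : X.rank = 0) : X = 0 := by
  have hrange : LinearMap.range X.mulVecLin = ⊥ := by
    rw [Matrix.rank] at h
    exact Submodule.finrank_eq_zero.1 h
  have hmap : X.mulVecLin = 0 := LinearMap.range_eq_bot.1 hrange
  ext i j
  have : X.mulVecLin (Pi.single j 1) = 0 := by rw [hmap]; rfl
  have h2 := congrFun this i
  simp only [Matrix.mulVecLin_apply, Matrix.mulVec_single] at h2
  simpa using h2

lemma sv_mem {Xstar : Matrix (Fin n1) (Fin n2) ℝ} {Vs : Matrix (Fin n1) (Fin r) ℝ}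
    {Ss : Matrix (Fin r) (Fin r) ℝ} {Ws : Matrix (Fin n2) (Fin r) ℝ}
    (h : IsCompactSVD Xstar Vs Ss Ws) (i0 : Fin r) :
    Ss i0 i0 ∈ {t : ℝ | 0 < t ∧ ∃ i : Fin n2,
      t ^ 2 = (show (Xstarᵀ * Xstar).IsHermitian by simpa using Matrix.isHermitian_conjTranspose_mul_self Xstar).eigenvalues i} := by
  obtain ⟨hX, hV, hW, hdiag, hpos⟩ := h
  set M := Xstarᴴ * Xstar with hM
  have hMT : M = Xstarᵀ * Xstar := by
    rw [hM, Matrix.conjTranspose_eq_transpose_of_trivial]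
  have hSs : Ssᵀ = Ss := by
    ext i j
    rcases eq_or_ne i j with rfl | hij
    · rfl
    · rw [Matrix.transpose_apply, hdiag j i (Ne.symm hij), hdiag i j hij]
  have hMW : M * Ws = Ws * (Ss * Ss) := by
    rw [hMT, hX]
    simp only [Matrix.transpose_mul, Matrix.transpose_transpose, Matrix.mul_assoc]
    rw [hSs, hW, Matrix.mul_one, ← Matrix.mul_assoc Vsᵀ Vs Ss, hV, Matrix.one_mul]
  set lam := Ss i0 i0 ^ 2 with hlam
  set v : Fin n2 → ℝ := Ws *ᵥ Pi.single i0 1 with hv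
  have hvne : v ≠ 0 := by
    intro hv0
    have h1 : (Wsᵀ * Ws) i0 i0 = ∑ j, v j * v j := by
      simp only [Matrix.mul_apply, Matrix.transpose_apply, hv, Matrix.mulVec_single]
      simp
    rw [hW, hv0] at h1
    simp at h1
  have hdv : ((Ss * Ss) *ᵥ Pi.single i0 1) = lam • (Pi.single i0 1 : Fin r → ℝ) := by
    funext i
    rw [show ((Ss * Ss) *ᵥ Pi.single i0 1) i = (Ss * Ss) i i0 * 1 from
      congrFun (Matrix.mulVec_single _ i0 1) i]
    simp only [Pi.smul_apply, smul_eq_mul, mul_one]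
    rw [Matrix.mul_apply]
    by_cases hii : i = i0
    · rw [hii]
      rw [Finset.sum_eq_single i0]
      · simp [hlam, Pi.single_eq_same, sq]
      · intro b _ hb; rw [hdiag b i0 hb, mul_zero]
      · intro hmem; exact absurd (Finset.mem_univ _) hmem
    · rw [Finset.sum_eq_zero]
      · simp [Pi.single_eq_of_ne hii]
      · intro b _
        rcases eq_or_ne i b with rfl | hib
        · rw [hdiag i i0 hii, mul_zero]
        · rw [hdiag i b hib, zero_mul]
  have hMv : M *ᵥ v = lam • v := by
    rw [hv, Matrix.mulVec_mulVec, hMW, ← Matrix.mulVec_mulVec, hdv, Matrix.mulVec_smul]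
  have hspec : lam ∈ spectrum ℝ M := by
    rw [spectrum.mem_iff]
    intro hunit
    rw [Matrix.isUnit_iff_isUnit_det] at hunit
    have hdet0 : (algebraMap ℝ (Matrix (Fin n2) (Fin n2) ℝ) lam - M).det = 0 := by
      rw [Matrix.exists_mulVec_eq_zero_iff.symm]
      refine ⟨v, hvne, ?_⟩
      rw [Matrix.sub_mulVec, hMv, Algebra.algebraMap_eq_smul_one]
      rw [Matrix.smul_mulVec, Matrix.one_mulVec]
      simp
    rw [hdet0] at hunit
    exact hunit.ne_zero rfl
  have hherm : (Xstarᵀ * Xstar).IsHermitian := by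
    simpa using Matrix.isHermitian_conjTranspose_mul_self Xstar
  rw [hMT] at hspec
  rw [Matrix.IsHermitian.spectrum_real_eq_range_eigenvalues hherm] at hspec
  obtain ⟨i, hi⟩ := hspec
  exact ⟨hpos i0, i, hi.symm⟩

lemma sigmaMin_le {Xstar : Matrix (Fin n1) (Fin n2) ℝ} {Vs : Matrix (Fin n1) (Fin r) ℝ}
    {Ss : Matrix (Fin r) (Fin r) ℝ} {Ws : Matrix (Fin n2) (Fin r) ℝ}
    (h : IsCompactSVD Xstar Vs Ss Ws) (i0 : Fin r) : sigmaMin Xstar ≤ Ss i0 i0 :=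
  csInf_le ⟨0, fun s hs => le_of_lt hs.1⟩ (sv_mem h i0)

lemma sigmaMin_pos {Xstar : Matrix (Fin n1) (Fin n2) ℝ} {Vs : Matrix (Fin n1) (Fin r) ℝ}
    {Ss : Matrix (Fin r) (Fin r) ℝ} {Ws : Matrix (Fin n2) (Fin r) ℝ}
    (h : IsCompactSVD Xstar Vs Ss Ws) (hr : 0 < r) : 0 < sigmaMin Xstar := by
  set S := {t : ℝ | 0 < t ∧ ∃ i : Fin n2,
    t ^ 2 = (show (Xstarᵀ * Xstar).IsHermitian by simpa using Matrix.isHermitian_conjTranspose_mul_self Xstar).eigenvalues i} with hS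
  have hne : S.Nonempty := ⟨Ss ⟨0, hr⟩ ⟨0, hr⟩, sv_mem h ⟨0, hr⟩⟩
  have hsub : S ⊆ Set.range (fun i : Fin n2 =>
      Real.sqrt ((show (Xstarᵀ * Xstar).IsHermitian by simpa using Matrix.isHermitian_conjTranspose_mul_self Xstar).eigenvalues i)) := by
    rintro t ⟨ht, i, hti⟩
    refine ⟨i, ?_⟩
    show Real.sqrt ((show (Xstarᵀ * Xstar).IsHermitian by simpa using Matrix.isHermitian_conjTranspose_mul_self Xstar).eigenvalues i) = t
    rw [← hti, Real.sqrt_sq ht.le]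
  have hfin : S.Finite := Set.Finite.subset (Set.finite_range _) hsub
  have hmem := hne.csInf_mem hfin
  exact hmem.1

lemma key_identity {r k l : ℕ} (C G : Matrix (Fin l) (Fin r) ℝ) (B H : Matrix (Fin r) (Fin k) ℝ)
    (Ai Ai' F : Matrix (Fin r) (Fin r) ℝ) (hinv : Ai' = Ai + Ai * (F * Ai')) :
    C * (Ai * B) - (C - G) * (Ai' * (B - H)) =
      -(C * (Ai * (F * (Ai' * B)))) + C * (Ai' * H) + G * (Ai' * B) - G * (Ai' * H) := by
  have h1 : C * (Ai' * B) = C * (Ai * B) + C * (Ai * (F * (Ai' * B))) := by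
    nth_rewrite 1 [hinv]
    rw [Matrix.add_mul, Matrix.mul_add]
    congr 1
    simp only [Matrix.mul_assoc]
  have h2 : (C - G) * (Ai' * (B - H)) =
      C * (Ai' * B) - C * (Ai' * H) - G * (Ai' * B) + G * (Ai' * H) := by
    rw [Matrix.mul_sub Ai', Matrix.sub_mul, Matrix.mul_sub, Matrix.mul_sub]
    abel
  rw [h2, h1]
  abel

lemma mle {x u y v : ℝ} (h1 : x ≤ u) (h2 : y ≤ v) (hy : 0 ≤ y) (hu : 0 ≤ u) :
    x * y ≤ u * v := mul_le_mul h1 h2 hy hu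

end Aux5
end AuxLemmas3
section AuxLemmas4
open Matrix
namespace Aux5
variable {n1 n2 l r m k d1 d3 : ℕ}

lemma frobNorm_zero : frobNorm (0 : Matrix (Fin n1) (Fin n2) ℝ) = 0 := by
  unfold frobNorm; simp

lemma frob_pm {P : Matrix (Fin l) (Fin n1) ℝ} (M : Matrix (Fin n1) (Fin n2) ℝ)
    (hP : specNorm P ≤ 1) : frobNorm (P * M) ≤ frobNorm M :=
  le_trans (frobNorm_mul_le_left _ _)
    (by nlinarith [frobNorm_nonneg M, specNorm_nonneg P])

lemma frob_mq {Q : Matrix (Fin n2) (Fin l) ℝ} (M : Matrix (Fin n1) (Fin n2) ℝ)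
    (hQ : specNorm Q ≤ 1) : frobNorm (M * Q) ≤ frobNorm M :=
  le_trans (frobNorm_mul_le_right _ _)
    (by nlinarith [frobNorm_nonneg M, specNorm_nonneg Q])

lemma frob_pmq {P : Matrix (Fin l) (Fin n1) ℝ} {Q : Matrix (Fin n2) (Fin k) ℝ}
    (M : Matrix (Fin n1) (Fin n2) ℝ) (hP : specNorm P ≤ 1) (hQ : specNorm Q ≤ 1) :
    frobNorm (P * M * Q) ≤ frobNorm M :=
  le_trans (frob_mq _ hQ) (frob_pm _ hP)

lemma spec_pmq {P : Matrix (Fin l) (Fin n1) ℝ} {Q : Matrix (Fin n2) (Fin k) ℝ}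
    (M : Matrix (Fin n1) (Fin n2) ℝ) (hP : specNorm P ≤ 1) (hQ : specNorm Q ≤ 1) :
    specNorm (P * M * Q) ≤ specNorm M := by
  have h1 : specNorm (P * M * Q) ≤ specNorm (P * M) * specNorm Q := specNorm_mul_le _ _
  have h2 : specNorm (P * M) ≤ specNorm P * specNorm M := specNorm_mul_le _ _
  nlinarith [specNorm_nonneg (P * M), specNorm_nonneg M, specNorm_nonneg P, specNorm_nonneg Q]

lemma frob5 (C : Matrix (Fin d1) (Fin r) ℝ) (Ai F Ai' : Matrix (Fin r) (Fin r) ℝ)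
    (B : Matrix (Fin r) (Fin d3) ℝ) {c1 c2 c3 c4 c5 : ℝ}
    (h1 : specNorm C ≤ c1) (h2 : specNorm Ai ≤ c2) (h3 : frobNorm F ≤ c3)
    (h4 : specNorm Ai' ≤ c4) (h5 : specNorm B ≤ c5)
    (n1' : 0 ≤ c1) (n2' : 0 ≤ c2) (n3' : 0 ≤ c3) (n4' : 0 ≤ c4) :
    frobNorm (C * (Ai * (F * (Ai' * B)))) ≤ c1 * (c2 * (c3 * (c4 * c5))) := by
  have b1 : specNorm (Ai' * B) ≤ c4 * c5 :=
    le_trans (specNorm_mul_le _ _) (mle h4 h5 (specNorm_nonneg B) n4')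
  have b2 : frobNorm (F * (Ai' * B)) ≤ c3 * (c4 * c5) :=
    le_trans (frobNorm_mul_le_right _ _) (mle h3 b1 (specNorm_nonneg _) n3')
  have b3 : frobNorm (Ai * (F * (Ai' * B))) ≤ c2 * (c3 * (c4 * c5)) :=
    le_trans (frobNorm_mul_le_left _ _) (mle h2 b2 (frobNorm_nonneg _) n2')
  exact le_trans (frobNorm_mul_le_left _ _) (mle h1 b3 (frobNorm_nonneg _) n1')

lemma frob3L (C : Matrix (Fin d1) (Fin r) ℝ) (Ai : Matrix (Fin r) (Fin r) ℝ)
    (H : Matrix (Fin r) (Fin d3) ℝ) {c1 c2 c3 : ℝ}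
    (h1 : specNorm C ≤ c1) (h2 : specNorm Ai ≤ c2) (h3 : frobNorm H ≤ c3)
    (n1' : 0 ≤ c1) (n2' : 0 ≤ c2) :
    frobNorm (C * (Ai * H)) ≤ c1 * (c2 * c3) := by
  have b1 : frobNorm (Ai * H) ≤ c2 * c3 :=
    le_trans (frobNorm_mul_le_left _ _) (mle h2 h3 (frobNorm_nonneg _) n2')
  exact le_trans (frobNorm_mul_le_left _ _) (mle h1 b1 (frobNorm_nonneg _) n1')

lemma frob3R (G : Matrix (Fin d1) (Fin r) ℝ) (Ai : Matrix (Fin r) (Fin r) ℝ)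
    (B : Matrix (Fin r) (Fin d3) ℝ) {c1 c2 c3 : ℝ}
    (h1 : frobNorm G ≤ c1) (h2 : specNorm Ai ≤ c2) (h3 : specNorm B ≤ c3)
    (n1' : 0 ≤ c1) (n2' : 0 ≤ c2) :
    frobNorm (G * (Ai * B)) ≤ c1 * (c2 * c3) := by
  have b1 : specNorm (Ai * B) ≤ c2 * c3 :=
    le_trans (specNorm_mul_le _ _) (mle h2 h3 (specNorm_nonneg _) n2')
  exact le_trans (frobNorm_mul_le_right _ _) (mle h1 b1 (specNorm_nonneg _) n1')

lemma tri4 {d1 d2 : ℕ} (W1 W2 W3 W4 : Matrix (Fin d1) (Fin d2) ℝ) :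
    frobNorm (-W1 + W2 + W3 - W4) ≤ frobNorm W1 + frobNorm W2 + frobNorm W3 + frobNorm W4 := by
  calc frobNorm (-W1 + W2 + W3 - W4) = frobNorm ((-W1 + W2 + W3) + (-W4)) := by
        rw [sub_eq_add_neg]
  _ ≤ frobNorm (-W1 + W2 + W3) + frobNorm (-W4) := frobNorm_add_le _ _
  _ ≤ (frobNorm (-W1 + W2) + frobNorm W3) + frobNorm W4 := by
      rw [frobNorm_neg]
      exact add_le_add (frobNorm_add_le _ _) le_rfl
  _ ≤ ((frobNorm (-W1) + frobNorm W2) + frobNorm W3) + frobNorm W4 :=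
      add_le_add (add_le_add (frobNorm_add_le _ _) le_rfl) le_rfl
  _ = frobNorm W1 + frobNorm W2 + frobNorm W3 + frobNorm W4 := by rw [frobNorm_neg]

end Aux5
end AuxLemmas4

set_option maxHeartbeats 2000000 in
/-- Frobenius-norm control of `X_t − X'` in terms of its projections
onto the column/row spaces of `X⋆`. -/
theorem statement5 {n1 n2 r : ℕ}
    (Xstar Xt X' : Matrix (Fin n1) (Fin n2) ℝ)
    (Vs : Matrix (Fin n1) (Fin r) ℝ) (Ss : Matrix (Fin r) (Fin r) ℝ)
    (Ws : Matrix (Fin n2) (Fin r) ℝ) (hXstar : IsCompactSVD Xstar Vs Ss Ws)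
    (Vsp : Matrix (Fin n1) (Fin (n1 - r)) ℝ) (hVsp : IsOrthComplement Vs Vsp)
    (Wsp : Matrix (Fin n2) (Fin (n2 - r)) ℝ) (hWsp : IsOrthComplement Ws Wsp)
    (Vt : Matrix (Fin n1) (Fin r) ℝ) (St : Matrix (Fin r) (Fin r) ℝ)
    (Wt : Matrix (Fin n2) (Fin r) ℝ) (hXt : IsCompactSVD Xt Vt St Wt)
    (hX' : X'.rank = r)
    (hproj : max (specNorm (Vspᵀ * Vt)) (specNorm (Wspᵀ * Wt)) ≤ 1 / 8)
    (hop : specNorm (Xt - Xstar) ≤ sigmaMin Xstar / 80)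
    (hfrob : frobNorm (Xt - X') ≤ sigmaMin Xstar / 80) :
    frobNorm (Xt - X') ≤
      5 / 4 * (frobNorm (Vsᵀ * (Xt - X')) + frobNorm ((Xt - X') * Ws)) ∧
    frobNorm (Vspᵀ * (Xt - X') * Wsp) ≤
      1 / 4 * (frobNorm (Vsᵀ * (Xt - X')) + frobNorm ((Xt - X') * Ws)) := by
  classical
  obtain ⟨hXs_eq, hVs, hWs, hSdiag, hSpos⟩ := hXstar
  obtain ⟨hVsp1, hVsp2⟩ := hVsp
  obtain ⟨hWsp1, hWsp2⟩ := hWsp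
  obtain ⟨hXt_eq, hVt, hWt, hStdiag, hStpos⟩ := hXt
  rcases Nat.eq_zero_or_pos r with hr0 | hrpos
  · subst hr0
    have hX'0 : X' = 0 := Aux5.rank_zero_eq_zero hX'
    have hXt0 : Xt = 0 := by
      rw [hXt_eq]; ext i j; simp [Matrix.mul_apply]
    have hsub0 : Xt - X' = 0 := by rw [hXt0, hX'0, sub_zero]
    rw [hsub0]
    simp only [Matrix.mul_zero, Matrix.zero_mul, Aux5.frobNorm_zero]
    constructor <;> norm_num
  set Δ := Xt - X' with hΔdef
  set s := sigmaMin Xstar with hsdef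
  have hSVD : IsCompactSVD Xstar Vs Ss Ws := ⟨hXs_eq, hVs, hWs, hSdiag, hSpos⟩
  have hσle : ∀ i : Fin r, s ≤ Ss i i := fun i => Aux5.sigmaMin_le hSVD i
  have hspos : 0 < s := Aux5.sigmaMin_pos hSVD hrpos
  have hcompV : Vs * Vsᵀ + Vsp * Vspᵀ = 1 := Aux5.orth_complete hVs hVsp1 hVsp2
  have hcompW : Ws * Wsᵀ + Wsp * Wspᵀ = 1 := Aux5.orth_complete hWs hWsp1 hWsp2
  have hcompV' : Vsp * Vspᵀ + Vs * Vsᵀ = 1 := by rw [add_comm]; exact hcompV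
  have sWs : specNorm Ws ≤ 1 := Aux5.spec_orth_le_one hWs
  have sWsp : specNorm Wsp ≤ 1 := Aux5.spec_orth_le_one hWsp1
  have sVsT : specNorm Vsᵀ ≤ 1 := Aux5.spec_orthT_le_one hcompV
  have sVspT : specNorm Vspᵀ ≤ 1 := Aux5.spec_orthT_le_one hcompV'
  have hVspVs : Vspᵀ * Vs = 0 := by
    have := congrArg Matrix.transpose hVsp2
    rwa [Matrix.transpose_mul, Matrix.transpose_transpose, Matrix.transpose_zero] at this
  have hVspXs : Vspᵀ * Xstar = 0 := by
    rw [hXs_eq, ← Matrix.mul_assoc, ← Matrix.mul_assoc, hVspVs, Matrix.zero_mul,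
      Matrix.zero_mul]
  have hXsWsp : Xstar * Wsp = 0 := by
    rw [hXs_eq, Matrix.mul_assoc, hWsp2, Matrix.mul_zero]
  set F := Vsᵀ * Δ * Ws with hF
  set G := Vspᵀ * Δ * Ws with hG
  set H := Vsᵀ * Δ * Wsp with hH
  set A := Vsᵀ * Xt * Ws with hA
  set A' := Vsᵀ * X' * Ws with hA'
  set B := Vsᵀ * Xt * Wsp with hB
  set C := Vspᵀ * Xt * Ws with hC
  have hVsXsWs : Vsᵀ * Xstar * Ws = Ss := by
    rw [hXs_eq]
    simp only [Matrix.mul_assoc]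
    rw [hWs, Matrix.mul_one, ← Matrix.mul_assoc, hVs, Matrix.one_mul]
  have hAE : A = Ss + Vsᵀ * (Xt - Xstar) * Ws := by
    rw [hA, Matrix.mul_sub, Matrix.sub_mul, hVsXsWs]
    abel
  have hspecXtXs : specNorm (Xt - Xstar) ≤ s / 80 := hop
  have hfrΔ : frobNorm Δ ≤ s / 80 := hfrob
  have hspecE : specNorm (Vsᵀ * (Xt - Xstar) * Ws) ≤ s / 80 :=
    le_trans (Aux5.spec_pmq _ sVsT sWs) hspecXtXs
  have hAlb : ∀ x, (s * (79 / 80)) * vecNorm x ≤ vecNorm (A *ᵥ x) := by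
    intro x
    have h1 : s * vecNorm x ≤ vecNorm (Ss *ᵥ x) :=
      Aux5.diag_lb Ss hspos.le hSdiag hσle x
    have h2 : A *ᵥ x = Ss *ᵥ x + (Vsᵀ * (Xt - Xstar) * Ws) *ᵥ x := by
      rw [hAE, Matrix.add_mulVec]
    have h3 : vecNorm (Ss *ᵥ x) ≤
        vecNorm (A *ᵥ x) + vecNorm ((Vsᵀ * (Xt - Xstar) * Ws) *ᵥ x) := by
      have e : Ss *ᵥ x = A *ᵥ x + -((Vsᵀ * (Xt - Xstar) * Ws) *ᵥ x) := by
        rw [h2]; abel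
      rw [e]
      refine le_trans (Aux5.vecNorm_add_le _ _) ?_
      rw [Aux5.vecNorm_neg]
    have h4 : vecNorm ((Vsᵀ * (Xt - Xstar) * Ws) *ᵥ x) ≤ (s / 80) * vecNorm x :=
      le_trans (Aux5.mulVec_le_spec _ x)
        (mul_le_mul_of_nonneg_right hspecE (Aux5.vecNorm_nonneg x))
    linarith
  obtain ⟨hAdet, hAinv⟩ := Aux5.inverse_of_lb A (mul_pos hspos (by norm_num)) hAlb
  have hA'A : A' = A - F := by
    rw [hA', hA, hF, hΔdef, Matrix.mul_sub, Matrix.sub_mul]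
    abel
  have hspecF : specNorm F ≤ s / 80 := by
    refine le_trans (Aux5.specNorm_le_frobNorm F) (le_trans ?_ hfrΔ)
    rw [hF]
    exact Aux5.frob_pmq _ sVsT sWs
  have hA'lb : ∀ x, (s * (78 / 80)) * vecNorm x ≤ vecNorm (A' *ᵥ x) := by
    intro x
    have h2 : A *ᵥ x = A' *ᵥ x + F *ᵥ x := by
      rw [hA'A, Matrix.sub_mulVec]; abel
    have h3 : vecNorm (A *ᵥ x) ≤ vecNorm (A' *ᵥ x) + vecNorm (F *ᵥ x) := by
      rw [h2]; exact Aux5.vecNorm_add_le _ _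
    have h4 : vecNorm (F *ᵥ x) ≤ (s / 80) * vecNorm x :=
      le_trans (Aux5.mulVec_le_spec _ x)
        (mul_le_mul_of_nonneg_right hspecF (Aux5.vecNorm_nonneg x))
    have h5 := hAlb x
    linarith
  obtain ⟨hA'det, hA'inv⟩ := Aux5.inverse_of_lb A' (mul_pos hspos (by norm_num)) hA'lb
  have hBalt : B = Vsᵀ * (Xt - Xstar) * Wsp := by
    rw [hB, Matrix.mul_sub, Matrix.sub_mul, Matrix.mul_assoc Vsᵀ Xstar Wsp, hXsWsp,
      Matrix.mul_zero, sub_zero]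
  have hspecB : specNorm B ≤ s / 80 := by
    rw [hBalt]
    exact le_trans (Aux5.spec_pmq _ sVsT sWsp) hspecXtXs
  have hCalt : C = Vspᵀ * (Xt - Xstar) * Ws := by
    rw [hC, Matrix.mul_sub, hVspXs, sub_zero]
  have hspecC : specNorm C ≤ s / 80 := by
    rw [hCalt]
    exact le_trans (Aux5.spec_pmq _ sVspT sWs) hspecXtXs
  have hXtrank : Xt.rank ≤ r := Aux5.rank_svd_le hXt_eq
  have hAdet2 : IsUnit (Vsᵀ * Xt * Ws).det := by rw [← hA]; exact hAdet
  have hA'det2 : IsUnit (Vsᵀ * X' * Ws).det := by rw [← hA']; exact hA'det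
  have h1s := Aux5.schur_col Xt hXtrank Vs Ws Wsp hAdet2
  have h2s := Aux5.schur_col X' (le_of_eq hX') Vs Ws Wsp hA'det2
  have hinv : A'⁻¹ = A⁻¹ + A⁻¹ * (F * A'⁻¹) := by
    have hFA : F = A - A' := by rw [hA'A]; abel
    have e2 : A⁻¹ * (F * A'⁻¹) = A'⁻¹ - A⁻¹ := by
      rw [hFA, Matrix.sub_mul, Matrix.mul_nonsing_inv _ hA'det, Matrix.mul_sub,
        Matrix.mul_one, ← Matrix.mul_assoc, Matrix.nonsing_inv_mul _ hAdet, Matrix.one_mul]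
    rw [e2]; abel
  have hC' : Vspᵀ * X' * Ws = C - G := by
    rw [hC, hG, hΔdef, Matrix.mul_sub, Matrix.sub_mul]; abel
  have hB'x : Vsᵀ * (X' * Wsp) = B - H := by
    rw [← Matrix.mul_assoc, hB, hH, hΔdef, Matrix.mul_sub, Matrix.sub_mul]; abel
  have hBx : Vsᵀ * (Xt * Wsp) = B := by rw [hB, Matrix.mul_assoc]
  have hmain : Vspᵀ * Δ * Wsp =
      -(C * (A⁻¹ * (F * (A'⁻¹ * B)))) + C * (A'⁻¹ * H) + G * (A'⁻¹ * B) - G * (A'⁻¹ * H) := by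
    have e1 : Vspᵀ * Δ * Wsp = Vspᵀ * (Xt * Wsp) - Vspᵀ * (X' * Wsp) := by
      rw [hΔdef, Matrix.mul_sub, Matrix.sub_mul, Matrix.mul_assoc, Matrix.mul_assoc]
    have e2 : ∀ M : Matrix (Fin r) (Fin (n2 - r)) ℝ, Vspᵀ * (Xt * Ws * M) = C * M := by
      intro M; rw [hC]; simp only [Matrix.mul_assoc]
    have e3 : ∀ M : Matrix (Fin r) (Fin (n2 - r)) ℝ,
        Vspᵀ * (X' * Ws * M) = (Vspᵀ * X' * Ws) * M := by
      intro M; simp only [Matrix.mul_assoc]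
    rw [e1, h1s, h2s, ← hA, ← hA', hBx, hB'x, e2, e3, hC']
    exact Aux5.key_identity C G B H A⁻¹ A'⁻¹ F hinv
  have hfF : frobNorm F ≤ frobNorm (Vsᵀ * Δ) := by
    rw [hF]; exact Aux5.frob_mq _ sWs
  have hfH : frobNorm H ≤ frobNorm (Vsᵀ * Δ) := by
    rw [hH]; exact Aux5.frob_mq _ sWsp
  have hfG : frobNorm G ≤ frobNorm (Δ * Ws) := by
    rw [hG, Matrix.mul_assoc]; exact Aux5.frob_pm _ sVspT
  have hspecH : specNorm H ≤ s / 80 := by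
    refine le_trans (Aux5.specNorm_le_frobNorm H) (le_trans ?_ hfrΔ)
    rw [hH]; exact Aux5.frob_pmq _ sVsT sWsp
  have ha0 : 0 ≤ frobNorm (Vsᵀ * Δ) := Aux5.frobNorm_nonneg _
  have hb0 : 0 ≤ frobNorm (Δ * Ws) := Aux5.frobNorm_nonneg _
  have hs80 : (0:ℝ) ≤ s / 80 := div_nonneg hspos.le (by norm_num)
  have hi1nn : (0:ℝ) ≤ (s * (79 / 80))⁻¹ :=
    inv_nonneg.2 (mul_nonneg hspos.le (by norm_num))
  have hi2nn : (0:ℝ) ≤ (s * (78 / 80))⁻¹ :=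
    inv_nonneg.2 (mul_nonneg hspos.le (by norm_num))
  have hT1 := Aux5.frob5 C A⁻¹ F A'⁻¹ B hspecC hAinv hfF hA'inv hspecB hs80 hi1nn ha0 hi2nn
  have hT2 := Aux5.frob3L C A'⁻¹ H hspecC hA'inv hfH hs80 hi2nn
  have hT3 := Aux5.frob3R G A'⁻¹ B hfG hA'inv hspecB hb0 hi2nn
  have hT4 := Aux5.frob3R G A'⁻¹ H hfG hA'inv hspecH hb0 hi2nn
  have hctri : frobNorm (Vspᵀ * Δ * Wsp) ≤
      frobNorm (C * (A⁻¹ * (F * (A'⁻¹ * B)))) + frobNorm (C * (A'⁻¹ * H)) +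
      frobNorm (G * (A'⁻¹ * B)) + frobNorm (G * (A'⁻¹ * H)) := by
    rw [hmain]; exact Aux5.tri4 _ _ _ _
  have hsne : s ≠ 0 := ne_of_gt hspos
  have e1 : s / 80 * ((s * (79 / 80))⁻¹ * (frobNorm (Vsᵀ * Δ) * ((s * (78 / 80))⁻¹ * (s / 80))))
      = frobNorm (Vsᵀ * Δ) * (1 / 6162) := by
    field_simp
    ring
  have e2 : s / 80 * ((s * (78 / 80))⁻¹ * frobNorm (Vsᵀ * Δ))
      = frobNorm (Vsᵀ * Δ) * (1 / 78) := by
    field_simp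
  have e3 : frobNorm (Δ * Ws) * ((s * (78 / 80))⁻¹ * (s / 80))
      = frobNorm (Δ * Ws) * (1 / 78) := by
    field_simp
  have hgoal2 : frobNorm (Vspᵀ * Δ * Wsp) ≤
      1 / 4 * (frobNorm (Vsᵀ * Δ) + frobNorm (Δ * Ws)) := by
    rw [e1] at hT1
    rw [e2] at hT2
    rw [e3] at hT3 hT4
    linarith
  refine ⟨?_, hgoal2⟩
  have hpyV := Aux5.frob_pythagoras_left hcompV Δ
  have hpyW := Aux5.frob_pythagoras_right hcompW (Vspᵀ * Δ)
  rw [← hG] at hpyW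
  have hfGnn : 0 ≤ frobNorm G := Aux5.frobNorm_nonneg _
  have hcnn : 0 ≤ frobNorm (Vspᵀ * Δ * Wsp) := Aux5.frobNorm_nonneg _
  have hD2 : frobNorm Δ ^ 2 ≤
      (5 / 4 * (frobNorm (Vsᵀ * Δ) + frobNorm (Δ * Ws))) ^ 2 := by
    nlinarith [hpyV, hpyW, hfG, hgoal2, ha0, hb0, hfGnn, hcnn, mul_nonneg ha0 hb0]
  exact Aux5.sq_le_imp _ _ (by linarith) hD2 (Aux5.frobNorm_nonneg Δ)
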